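/- arXiv:solv-int/9909006 — 2 statements merged into one kernel-verified Lean document; each statement's English description precedes it below -/
import Mathlib

section
/- Assume a_1 ≠ 0, let b ∈ ℝ, and let H̃ = e^{q_2−q_1}(H+b). Define the transformed monodromy matrix T̃ = T_1·M·T_3, where M = [[λ−p_2, a_2e^{q_2}],[−e^{−q_2}(1 − H̃/a_1), 0]] and T_1, T_3 are the Toda local Lax matrices. Then det T̃ = (a_1 − H̃)·a_2a_3, and tr T̃ = tr(T_1T_2T_3) + (H+b)(λ−p_3); in particular, as a polynomial in λ, the coefficient of λ in tr T̃ equals P²/2 + b, where P = p_1+p_2+p_3. -/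
open Real Matrix

/-- The periodic three-particle Toda Hamiltonian. -/
noncomputable def todaH (a1 a2 a3 : ℝ) (p q : Fin 3 → ℝ) : ℝ :=
  (1 / 2) * ((p 0) ^ 2 + (p 1) ^ 2 + (p 2) ^ 2)
    + a1 * exp (q 0 - q 1) + a2 * exp (q 1 - q 2)
    + a3 * exp (q 2 - q 0)

/-- The `2×2` local Lax matrix `T_j = [[λ−p_j, a_j e^{q_j}],[−e^{−q_j}, 0]]`. -/
noncomputable def todaT (a pj qj lam : ℝ) : Matrix (Fin 2) (Fin 2) ℝ :=
  !![lam - pj, a * exp qj;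
     -exp (-qj), 0]

/-- with `H̃ = e^{q₂−q₁}(H+b)` and the transformed monodromy
matrix `T̃ = T₁·M·T₃`, `M = [[λ−p₂, a₂e^{q₂}],[−e^{−q₂}(1 − H̃/a₁), 0]]`, one
has `det T̃ = (a₁−H̃)a₂a₃`, `tr T̃ = tr(T₁T₂T₃) + (H+b)(λ−p₃)`, and the
coefficient of `λ` in `tr T̃` is `P²/2 + b`. -/
theorem stmt_16 (a1 a2 a3 b : ℝ) (ha1 : a1 ≠ 0) (p q : Fin 3 → ℝ)
    (H Ht : ℝ)
    (hH : H = todaH a1 a2 a3 p q)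
    (hHt : Ht = exp (q 1 - q 0) * (H + b))
    (M : ℝ → Matrix (Fin 2) (Fin 2) ℝ)
    (hM : ∀ lam, M lam = !![lam - p 1, a2 * exp (q 1);
                            -exp (-(q 1)) * (1 - Ht / a1), 0])
    (Tt : ℝ → Matrix (Fin 2) (Fin 2) ℝ)
    (hTt : ∀ lam, Tt lam =
      todaT a1 (p 0) (q 0) lam * M lam * todaT a3 (p 2) (q 2) lam) :
    (∀ lam : ℝ, (Tt lam).det = (a1 - Ht) * a2 * a3) ∧
    (∀ lam : ℝ, (Tt lam).trace =
      (todaT a1 (p 0) (q 0) lam * todaT a2 (p 1) (q 1) lam *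
          todaT a3 (p 2) (q 2) lam).trace + (H + b) * (lam - p 2)) ∧
    (∃ c2 c0 : ℝ, ∀ lam : ℝ,
      (Tt lam).trace =
        lam ^ 3 + c2 * lam ^ 2 + ((p 0 + p 1 + p 2) ^ 2 / 2 + b) * lam + c0) := by
  have e0 := Real.exp_ne_zero (q 0)
  have e1 := Real.exp_ne_zero (q 1)
  have e2 := Real.exp_ne_zero (q 2)
  refine ⟨?_, ?_, ?_⟩
  · intro lam
    rw [hTt, hM, todaT, todaT, Matrix.det_mul, Matrix.det_mul,
      Matrix.det_fin_two_of, Matrix.det_fin_two_of, Matrix.det_fin_two_of, hHt]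
    simp only [Real.exp_sub, Real.exp_neg]
    field_simp
    ring
  · intro lam
    rw [hTt, hM]
    simp only [todaH, todaT, Matrix.trace_fin_two, Matrix.mul_apply,
      Fin.sum_univ_two, Matrix.cons_val', Matrix.cons_val_zero, Matrix.cons_val_one,
      Matrix.head_cons, Matrix.head_fin_const, Matrix.empty_val',
      Matrix.cons_val_fin_one, Matrix.of_apply, hHt, hH]
    simp only [Real.exp_sub, Real.exp_neg]
    field_simp
    ring
  · refine ⟨-(p 0 + p 1 + p 2),
      -(p 0 * p 1 * p 2) + a1 * exp (q 0 - q 1) * p 2 + a2 * exp (q 1 - q 2) * p 0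
        + a3 * exp (q 2 - q 0) * p 1 - (H + b) * p 2, fun lam => ?_⟩
    rw [hTt, hM]
    simp only [todaH, todaT, Matrix.trace_fin_two, Matrix.mul_apply,
      Fin.sum_univ_two, Matrix.cons_val', Matrix.cons_val_zero, Matrix.cons_val_one,
      Matrix.head_cons, Matrix.head_fin_const, Matrix.empty_val',
      Matrix.cons_val_fin_one, Matrix.of_apply, hHt, hH]
    simp only [Real.exp_sub, Real.exp_neg]
    field_simp
    ring
end

section
/- Work in canonical polar coordinates (p_r, r, p_φ, φ) on {r > 0} with canonical Poisson bracket {f,g} = ∂f/∂p_r·∂g/∂r − ∂f/∂r·∂g/∂p_r + ∂f/∂p_φ·∂g/∂φ − ∂f/∂φ·∂g/∂p_φ. Fix real constants a, b, c, k, n, let f(r) = c·r^n, and define the shifted momenta p̃_r = p_r − c·r^{n−1}·cos(nφ) and p̃_φ = p_φ + c·r^n·sin(nφ). Let I_1 = p_r² + p_φ²/r² − a²r^{2k} + b, I_2 = p_φ, J_1 = p̃_r² + p̃_φ²/r², J_2 = p̃_φ. Then the differences are in involution: {I_1 − J_1, I_2 − J_2} = 0 at every point with r > 0. -/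
open Real

/-- The canonical Poisson bracket in the coordinates
`(p, q) = ((p_r, p_φ), (r, φ))` on `(Fin 2 → ℝ) × (Fin 2 → ℝ)`:
`{f,g} = ∂f/∂p_r·∂g/∂r − ∂f/∂r·∂g/∂p_r + ∂f/∂p_φ·∂g/∂φ − ∂f/∂φ·∂g/∂p_φ`. -/
noncomputable def pbracket (f g : (Fin 2 → ℝ) × (Fin 2 → ℝ) → ℝ)
    (z : (Fin 2 → ℝ) × (Fin 2 → ℝ)) : ℝ :=
  ∑ i : Fin 2,
    (fderiv ℝ f z (Pi.single i 1, 0) * fderiv ℝ g z (0, Pi.single i 1)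
      - fderiv ℝ f z (0, Pi.single i 1) * fderiv ℝ g z (Pi.single i 1, 0))

noncomputable def coordP (i : Fin 2) : ((Fin 2 → ℝ) × (Fin 2 → ℝ)) →L[ℝ] ℝ :=
  (ContinuousLinearMap.proj i).comp (ContinuousLinearMap.fst ℝ (Fin 2 → ℝ) (Fin 2 → ℝ))

noncomputable def coordQ (i : Fin 2) : ((Fin 2 → ℝ) × (Fin 2 → ℝ)) →L[ℝ] ℝ :=
  (ContinuousLinearMap.proj i).comp (ContinuousLinearMap.snd ℝ (Fin 2 → ℝ) (Fin 2 → ℝ))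

lemma hasFDerivAt_coordP (i : Fin 2) (z : (Fin 2 → ℝ) × (Fin 2 → ℝ)) :
    HasFDerivAt (fun w : (Fin 2 → ℝ) × (Fin 2 → ℝ) => w.1 i) (coordP i) z :=
  (coordP i).hasFDerivAt

lemma hasFDerivAt_coordQ (i : Fin 2) (z : (Fin 2 → ℝ) × (Fin 2 → ℝ)) :
    HasFDerivAt (fun w : (Fin 2 → ℝ) × (Fin 2 → ℝ) => w.2 i) (coordQ i) z :=
  (coordQ i).hasFDerivAt


/-- in polar canonical coordinates `(p_r, r, p_φ, φ)` (encoded as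
`z = ((p_r, p_φ), (r, φ))`), with `f(r) = c·rⁿ`, shifted momenta
`p̃_r = p_r − c·r^{n−1}cos(nφ)`, `p̃_φ = p_φ + c·rⁿ·sin(nφ)`, and the integrals
`I₁ = p_r² + p_φ²/r² − a²r^{2k} + b`, `I₂ = p_φ`, `J₁ = p̃_r² + p̃_φ²/r²`,
`J₂ = p̃_φ`, the differences are in involution: `{I₁ − J₁, I₂ − J₂} = 0`
wherever `r > 0`. -/
theorem stmt_18 (a b c k n : ℝ)
    (ptr ptphi I1 I2 J1 J2 : (Fin 2 → ℝ) × (Fin 2 → ℝ) → ℝ)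
    (hptr : ∀ z, ptr z = z.1 0 - c * (z.2 0) ^ (n - 1) * cos (n * z.2 1))
    (hptphi : ∀ z, ptphi z = z.1 1 + c * (z.2 0) ^ n * sin (n * z.2 1))
    (hI1 : ∀ z, I1 z =
      (z.1 0) ^ 2 + (z.1 1) ^ 2 / (z.2 0) ^ 2 - a ^ 2 * (z.2 0) ^ (2 * k) + b)
    (hI2 : ∀ z, I2 z = z.1 1)
    (hJ1 : ∀ z, J1 z = (ptr z) ^ 2 + (ptphi z) ^ 2 / (z.2 0) ^ 2)
    (hJ2 : ∀ z, J2 z = ptphi z) :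
    ∀ z : (Fin 2 → ℝ) × (Fin 2 → ℝ), 0 < z.2 0 →
      pbracket (fun w => I1 w - J1 w) (fun w => I2 w - J2 w) z = 0 := by
  intro z hz
  have hrne : z.2 0 ≠ 0 := hz.ne'
  have h2ne : (z.2 0) ^ 2 ≠ 0 := pow_ne_zero 2 hrne
  have hp0 := hasFDerivAt_coordP 0 z
  have hp1 := hasFDerivAt_coordP 1 z
  have hr := hasFDerivAt_coordQ 0 z
  have hphi := hasFDerivAt_coordQ 1 z
  have hcosd := (hphi.const_mul n).cos
  have hsind := (hphi.const_mul n).sin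
  have hrn1 := hr.rpow_const (p := n - 1) (Or.inl hrne)
  have hrn := hr.rpow_const (p := n) (Or.inl hrne)
  have hr2k := hr.rpow_const (p := 2 * k) (Or.inl hrne)
  have h2ne' : z.2 0 * z.2 0 ≠ 0 := mul_ne_zero hrne hrne
  have hr2 := hr.mul hr
  have hu := (hrn1.const_mul c).mul hcosd
  have hv := (hrn.const_mul c).mul hsind
  have hPtr := hp0.sub hu
  have hPtphi := hp1.add hv
  have hinv : HasFDerivAt (fun y : (Fin 2 → ℝ) × (Fin 2 → ℝ) => (y.2 0 * y.2 0)⁻¹)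
      ((-ContinuousLinearMap.mulLeftRight ℝ ℝ (z.2 0 * z.2 0)⁻¹ (z.2 0 * z.2 0)⁻¹).comp
        (z.2 0 • coordQ 0 + z.2 0 • coordQ 0)) z :=
    (hasFDerivAt_inv' (𝕜 := ℝ) h2ne').comp z hr2
  have hJ := (hPtr.mul hPtr).add ((hPtphi.mul hPtphi).mul hinv)
  have hI := (((hp0.mul hp0).add ((hp1.mul hp1).mul hinv)).sub (hr2k.const_mul (a ^ 2))).add_const b
  have hF := hI.sub hJ
  have hG := hp1.sub hPtphi
  have eF : (fun w => I1 w - J1 w) =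
      (fun w : (Fin 2 → ℝ) × (Fin 2 → ℝ) =>
        (w.1 0 * w.1 0 + w.1 1 * w.1 1 * (w.2 0 * w.2 0)⁻¹ - a ^ 2 * (w.2 0) ^ (2 * k) + b) -
        ((w.1 0 - c * (w.2 0) ^ (n - 1) * cos (n * w.2 1)) *
            (w.1 0 - c * (w.2 0) ^ (n - 1) * cos (n * w.2 1)) +
          (w.1 1 + c * (w.2 0) ^ n * sin (n * w.2 1)) *
            (w.1 1 + c * (w.2 0) ^ n * sin (n * w.2 1)) * (w.2 0 * w.2 0)⁻¹)) := by
    funext w; rw [hI1, hJ1, hptr, hptphi]; ring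
  have eG : (fun w => I2 w - J2 w) =
      (fun w : (Fin 2 → ℝ) × (Fin 2 → ℝ) =>
        w.1 1 - (w.1 1 + c * (w.2 0) ^ n * sin (n * w.2 1))) := by
    funext w; rw [hI2, hJ2, hptphi]
  have hF' : HasFDerivAt (fun w : (Fin 2 → ℝ) × (Fin 2 → ℝ) =>
          (w.1 0 * w.1 0 + w.1 1 * w.1 1 * (w.2 0 * w.2 0)⁻¹ - a ^ 2 * (w.2 0) ^ (2 * k) + b) -
          ((w.1 0 - c * (w.2 0) ^ (n - 1) * cos (n * w.2 1)) *
              (w.1 0 - c * (w.2 0) ^ (n - 1) * cos (n * w.2 1)) +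
            (w.1 1 + c * (w.2 0) ^ n * sin (n * w.2 1)) *
              (w.1 1 + c * (w.2 0) ^ n * sin (n * w.2 1)) * (w.2 0 * w.2 0)⁻¹)) _ z := hF
  have hG' : HasFDerivAt (fun w : (Fin 2 → ℝ) × (Fin 2 → ℝ) =>
          w.1 1 - (w.1 1 + c * (w.2 0) ^ n * sin (n * w.2 1))) _ z := hG
  rw [pbracket, eF, eG, hF'.fderiv, hG'.fderiv, Fin.sum_univ_two]
  simp only [ContinuousLinearMap.add_apply, ContinuousLinearMap.sub_apply,
    ContinuousLinearMap.smul_apply, ContinuousLinearMap.coe_comp',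
    ContinuousLinearMap.proj_apply, ContinuousLinearMap.coe_fst',
    ContinuousLinearMap.mulLeftRight_apply, ContinuousLinearMap.neg_apply,
    ContinuousLinearMap.coe_snd', Function.comp_apply, coordP, coordQ,
    smul_eq_mul, Pi.single_eq_same, ne_eq, Fin.zero_eta, Fin.mk_one,
    Prod.fst_zero, Prod.snd_zero, Pi.zero_apply]
  have key : (z.2 0) ^ n = (z.2 0) ^ (n - 1) * z.2 0 := by
    have h := Real.rpow_add_one hrne (n - 1)
    rwa [show n - 1 + 1 = n by ring] at h
  norm_num [Pi.single_apply]
  rw [key]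
  field_simp
  ring
end
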